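/- Let H be a compact abelian group which is the dual of a discrete torsion abelian group G. Then H is totally disconnected, and every neighborhood of zero in H contains an open compact subgroup. -/

import Mathlib

/-- The dual group of a discrete abelian group `G`: characters `G → ℂ`
(automatically continuous), topologized as a subspace of `G → ℂ` with the
topology of pointwise convergence (which is the compact-open topology since `G`
is discrete). -/
abbrev DiscreteDual (G : Type*) [AddCommGroup G] : Type _ :=
  {χ : G → ℂ // (∀ g, ‖χ g‖ = 1) ∧ ∀ a b : G, χ (a + b) = χ a * χ b}

/-- The trivial character. -/
def trivialChar (G : Type*) [AddCommGroup G] : DiscreteDual G :=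
  ⟨fun _ => 1, fun _ => by simp, fun _ _ => by ring⟩

section Aux

variable {G : Type*} [AddCommGroup G]

lemma char_zero' (χ : DiscreteDual G) : χ.1 0 = 1 := by
  have h := χ.2.2 0 0
  rw [add_zero] at h
  have hne : χ.1 0 ≠ 0 := by
    intro h0
    have := χ.2.1 0
    rw [h0] at this; simp at this
  have h2 : χ.1 0 * 1 = χ.1 0 * χ.1 0 := by rw [mul_one, ← h]
  exact (mul_left_cancel₀ hne h2).symm

lemma char_nsmul (χ : DiscreteDual G) (g : G) (n : ℕ) : χ.1 (n • g) = χ.1 g ^ n := by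
  induction n with
  | zero => simpa using char_zero' χ
  | succ n ih => rw [succ_nsmul, χ.2.2, ih, pow_succ]

lemma char_root (χ : DiscreteDual G) (g : G) :
    χ.1 g ^ (addOrderOf g) = 1 := by
  rw [← char_nsmul, addOrderOf_nsmul_eq_zero, char_zero']

lemma continuous_eval (g : G) : Continuous fun χ : DiscreteDual G => χ.1 g :=
  (continuous_apply g).comp continuous_subtype_val

lemma isClopen_eval (g : G) (hg : IsOfFinAddOrder g) (w : ℂ) :
    IsClopen {χ : DiscreteDual G | χ.1 g = w} := by
  have hn : 0 < addOrderOf g := hg.addOrderOf_pos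
  set n := addOrderOf g
  have hroot : ∀ χ : DiscreteDual G, χ.1 g ∈ Polynomial.nthRootsFinset n (1 : ℂ) := fun χ =>
    (Polynomial.mem_nthRootsFinset hn 1).2 (char_root χ g)
  constructor
  · -- closed
    exact isClosed_singleton.preimage (continuous_eval g)
  · -- open
    have hfin : IsClosed ((Polynomial.nthRootsFinset n (1 : ℂ) : Set ℂ) \ {w}) :=
      (((Polynomial.nthRootsFinset n (1 : ℂ) : Set ℂ).toFinite.subset Set.diff_subset).isClosed)
    have hw : w ∈ ((Polynomial.nthRootsFinset n (1 : ℂ) : Set ℂ) \ {w})ᶜ := by simp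
    obtain ⟨δ, hδ, hball⟩ := Metric.isOpen_iff.1 hfin.isOpen_compl w hw
    have : {χ : DiscreteDual G | χ.1 g = w} = (fun χ : DiscreteDual G => χ.1 g) ⁻¹' Metric.ball w δ := by
      ext χ
      simp only [Set.mem_setOf_eq, Set.mem_preimage, Metric.mem_ball]
      constructor
      · rintro rfl; simpa using hδ
      · intro hd
        by_contra hne
        have : χ.1 g ∈ (Polynomial.nthRootsFinset n (1 : ℂ) : Set ℂ) \ {w} := ⟨hroot χ, hne⟩
        exact hball hd this
    rw [this]
    exact Metric.isOpen_ball.preimage (continuous_eval g)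

instance : CompactSpace (DiscreteDual G) := by
  have key : IsCompact {χ : G → ℂ | (∀ g, ‖χ g‖ = 1) ∧ ∀ a b : G, χ (a + b) = χ a * χ b} := by
    have hsub : {χ : G → ℂ | (∀ g, ‖χ g‖ = 1) ∧ ∀ a b : G, χ (a + b) = χ a * χ b} ⊆
        Set.univ.pi (fun _ : G => Metric.sphere (0 : ℂ) 1) := by
      intro χ hχ g _
      simpa using hχ.1 g
    have hcomp : IsCompact (Set.univ.pi (fun _ : G => Metric.sphere (0 : ℂ) 1)) :=
      isCompact_univ_pi fun _ => isCompact_sphere 0 1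
    refine hcomp.of_isClosed_subset ?_ hsub
    have heq : {χ : G → ℂ | (∀ g, ‖χ g‖ = 1) ∧ ∀ a b : G, χ (a + b) = χ a * χ b} =
        (⋂ g, {χ : G → ℂ | ‖χ g‖ = 1}) ∩ ⋂ a, ⋂ b, {χ : G → ℂ | χ (a + b) = χ a * χ b} := by
      ext χ; simp [Set.mem_iInter]
    rw [heq]
    exact IsClosed.inter
      (isClosed_iInter fun g =>
        isClosed_eq (continuous_norm.comp (continuous_apply g)) continuous_const)
      (isClosed_iInter fun a => isClosed_iInter fun b =>
        isClosed_eq (continuous_apply (a + b))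
          ((continuous_apply a).mul (continuous_apply b)))
  exact isCompact_iff_compactSpace.mp key

end Aux

/-- The dual `H` of a discrete torsion abelian group `G` is totally
disconnected, and every neighborhood of zero of `H` contains an open compact
subgroup. -/
theorem discreteDual_of_torsion_totallyDisconnected_and_open_compact_subgroups
    (G : Type*) [AddCommGroup G] (htor : ∀ g : G, IsOfFinAddOrder g) :
    TotallyDisconnectedSpace (DiscreteDual G) ∧
    ∀ U : Set (DiscreteDual G), U ∈ nhds (trivialChar G) →
      ∃ V ⊆ U, IsOpen V ∧ IsCompact V ∧
        trivialChar G ∈ V ∧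
        (∀ χ ψ ρ : DiscreteDual G, χ ∈ V → ψ ∈ V →
          (∀ g, ρ.1 g = χ.1 g * ψ.1 g) → ρ ∈ V) ∧
        (∀ χ ρ : DiscreteDual G, χ ∈ V → (∀ g, ρ.1 g = (χ.1 g)⁻¹) → ρ ∈ V) := by
  constructor
  · refine @TotallySeparatedSpace.totallyDisconnectedSpace _ _
      (totallySeparatedSpace_iff_exists_isClopen.mpr fun χ ψ hne => ?_)
    have : ∃ g, χ.1 g ≠ ψ.1 g := by
      by_contra h
      push_neg at h
      exact hne (Subtype.ext (funext h))
    obtain ⟨g, hg⟩ := this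
    exact ⟨{ρ | ρ.1 g = χ.1 g}, isClopen_eval g (htor g) _, rfl, fun h => hg h.symm⟩
  · intro U hU
    -- U is a nhds of trivialChar in the subtype; get a finite set of coordinates
    have h1 : ∃ F : Finset G, {χ : DiscreteDual G | ∀ g ∈ F, χ.1 g = 1} ⊆ U := by
      rw [nhds_subtype_eq_comap, Filter.mem_comap] at hU
      obtain ⟨t, ht, hsub⟩ := hU
      rw [nhds_pi, Filter.mem_pi] at ht
      obtain ⟨I, hI, s, hs, hsub2⟩ := ht
      lift I to Finset G using hI
      refine ⟨I, fun χ hχ => hsub ?_⟩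
      apply hsub2
      intro g hg
      have := hχ g hg
      rw [this]
      simpa [trivialChar] using mem_of_mem_nhds (hs g)
    obtain ⟨F, hF⟩ := h1
    refine ⟨{χ : DiscreteDual G | ∀ g ∈ F, χ.1 g = 1}, hF, ?_, ?_, ?_, ?_, ?_⟩
    · have : {χ : DiscreteDual G | ∀ g ∈ F, χ.1 g = 1} =
          ⋂ g ∈ F, {χ : DiscreteDual G | χ.1 g = 1} := by
        ext χ; simp
      rw [this]
      exact isOpen_biInter_finset fun g _ => (isClopen_eval g (htor g) 1).2
    · apply IsClosed.isCompact
      have : {χ : DiscreteDual G | ∀ g ∈ F, χ.1 g = 1} =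
          ⋂ g ∈ F, {χ : DiscreteDual G | χ.1 g = 1} := by
        ext χ; simp
      rw [this]
      exact isClosed_biInter fun g _ => (isClopen_eval g (htor g) 1).1
    · intro g _; rfl
    · intro χ ψ ρ hχ hψ hρ g hg
      rw [hρ g, hχ g hg, hψ g hg, mul_one]
    · intro χ ρ hχ hρ g hg
      rw [hρ g, hχ g hg, inv_one]
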